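/- Every triangulation of a regular (3n+3)-gon invariant under rotation g by angle 2π/3 contains a diagonal d spanning exactly an angle of 2π/3 (i.e., connecting vertices i and i + n + 1), and the three diagonals d, g·d, g²·d form a central triangle of the triangulation. -/

import Mathlib

/-- `c` lies strictly inside the counterclockwise arc from `a` to `b`
on the `m`-gon with vertices `ZMod m`. -/
def Between {m : ℕ} [NeZero m] (a c b : ZMod m) : Prop :=
  0 < (c - a).val ∧ (c - a).val < (b - a).val

/-- Two chords of the `m`-gon, recorded as ordered pairs of endpoints,
cross in their interior. -/
def Crosses {m : ℕ} [NeZero m] (p q : ZMod m × ZMod m) : Prop :=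
  (Between p.1 q.1 p.2 ∧ Between p.2 q.2 p.1) ∨
  (Between p.1 q.2 p.2 ∧ Between p.2 q.1 p.1)

/-- A chord is a diagonal when its endpoints are distinct and non-adjacent. -/
def IsDiagonal {m : ℕ} (p : ZMod m × ZMod m) : Prop :=
  p.1 ≠ p.2 ∧ p.2 ≠ p.1 + 1 ∧ p.1 ≠ p.2 + 1

/-- A triangulation of the convex `m`-gon: a maximal collection of pairwise
non-crossing diagonals (recorded symmetrically as ordered pairs). -/
structure IsTriangulation (m : ℕ) [NeZero m] (D : Set (ZMod m × ZMod m)) : Prop where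
  symm : ∀ p ∈ D, (p.2, p.1) ∈ D
  diag : ∀ p ∈ D, IsDiagonal p
  noncross : ∀ p ∈ D, ∀ q ∈ D, ¬ Crosses p q
  maximal : ∀ p, IsDiagonal p → (∀ q ∈ D, ¬ Crosses p q) → p ∈ D

/-- Invariance of a set of diagonals under the rotation by `k` vertices. -/
def RotInvariant (m k : ℕ) (D : Set (ZMod m × ZMod m)) : Prop :=
  ∀ p : ZMod m × ZMod m, p ∈ D ↔ (p.1 + (k : ZMod m), p.2 + (k : ZMod m)) ∈ D

section helpers
variable {m : ℕ} [NeZero m]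

lemma val_sub' (u v : ZMod m) :
    (u - v).val = if v.val ≤ u.val then u.val - v.val else u.val + m - v.val := by
  have hu := ZMod.val_lt u
  have hv := ZMod.val_lt v
  rcases eq_or_ne v 0 with rfl | hv0
  · simp
  · rw [sub_eq_add_neg, ZMod.val_add, ZMod.neg_val, if_neg hv0]
    have hvv : v.val ≠ 0 := fun h => hv0 ((ZMod.val_eq_zero v).mp h)
    rcases le_or_gt v.val u.val with h | h
    · rw [if_pos h, show u.val + (m - v.val) = (u.val - v.val) + m by omega,
        Nat.add_mod_right, Nat.mod_eq_of_lt (by omega)]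
    · rw [if_neg (not_le.mpr h), show u.val + (m - v.val) = u.val + m - v.val by omega,
        Nat.mod_eq_of_lt (by omega)]

lemma between_coord (a x y z : ZMod m) :
    Between x y z ↔
      (0 < (if (x - a).val ≤ (y - a).val then (y - a).val - (x - a).val
            else (y - a).val + m - (x - a).val) ∧
       (if (x - a).val ≤ (y - a).val then (y - a).val - (x - a).val
            else (y - a).val + m - (x - a).val) <
       (if (x - a).val ≤ (z - a).val then (z - a).val - (x - a).val
            else (z - a).val + m - (x - a).val)) := by
  unfold Between
  rw [show y - x = (y - a) - (x - a) by ring, show z - x = (z - a) - (x - a) by ring,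
    val_sub' (y-a) (x-a), val_sub' (z-a) (x-a)]

lemma not_crosses_short {p : ZMod m × ZMod m} (h : (p.2 - p.1).val ≤ 1) (q : ZMod m × ZMod m) :
    ¬ Crosses p q := by
  rintro (⟨⟨h1, h2⟩, -⟩ | ⟨⟨h1, h2⟩, -⟩) <;> omega

end helpers

lemma apex {m : ℕ} [NeZero m] {D : Set (ZMod m × ZMod m)} (hD : IsTriangulation m D)
    {a b : ZMod m} (hab : (a, b) ∈ D) :
    ∃ c : ZMod m, (b - a).val < (c - a).val ∧
      ((b, c) ∈ D ∨ (c - b).val = 1) ∧ ((c, a) ∈ D ∨ (a - c).val = 1) := by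
  classical
  obtain ⟨hne, hadj1, hadj2⟩ := hD.diag _ hab
  have hslt := ZMod.val_lt (b - a)
  have hb0 : b - a ≠ 0 := sub_ne_zero.mpr (Ne.symm hne)
  have hs0 : (b - a).val ≠ 0 := fun h => hb0 ((ZMod.val_eq_zero _).mp h)
  have hs1 : (b - a).val ≠ 1 := by
    intro h1
    refine hadj1 ?_
    have h' : b - a = 1 := by rw [← ZMod.natCast_zmod_val (b - a), h1, Nat.cast_one]
    linear_combination h'
  have hsm : (a - b).val = m - (b - a).val := by
    rw [show a - b = -(b - a) by ring, ZMod.neg_val, if_neg hb0]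
  have hsm1 : (a - b).val ≠ 1 := by
    intro h1
    refine hadj2 ?_
    have h' : a - b = 1 := by rw [← ZMod.natCast_zmod_val (a - b), h1, Nat.cast_one]
    linear_combination h'
  have hs2 : 2 ≤ (b - a).val := by omega
  have hm4 : 4 ≤ m := by omega
  haveI : Fact (1 < m) := ⟨by omega⟩
  -- the far-side apex: minimal t with chord (a + t, a) crossing nothing
  have hTne : (b - a).val < m - 1 ∧ (m - 1) < m ∧
      ∀ q ∈ D, ¬ Crosses (a + ((m - 1 : ℕ) : ZMod m), a) q := by
    refine ⟨by omega, by omega, fun q hq => not_crosses_short ?_ q⟩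
    have h0 : ((m - 1 : ℕ) : ZMod m) + 1 = 0 := by
      have h00 : (((m - 1) + 1 : ℕ) : ZMod m) = 0 := by
        rw [show m - 1 + 1 = m by omega]; exact ZMod.natCast_self m
      push_cast at h00
      exact h00
    have h1 : -(((m - 1 : ℕ)) : ZMod m) = 1 := neg_eq_of_add_eq_zero_right h0
    show (a - (a + ((m - 1 : ℕ) : ZMod m))).val ≤ 1
    rw [show a - (a + ((m - 1 : ℕ) : ZMod m)) = -((m - 1 : ℕ) : ZMod m) by ring, h1,
      ZMod.val_one]
  obtain ⟨t, ⟨ht1, ht2, htnc⟩, htmin⟩ :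
      ∃ t : ℕ, ((b - a).val < t ∧ t < m ∧ ∀ q ∈ D, ¬ Crosses (a + (t : ZMod m), a) q) ∧
        ∀ t' : ℕ, (b - a).val < t' → t' < m →
          (∀ q ∈ D, ¬ Crosses (a + (t' : ZMod m), a) q) → t ≤ t' := by
    have hne' : ({u | (b - a).val < u ∧ u < m ∧
        ∀ q ∈ D, ¬ Crosses (a + (u : ZMod m), a) q} : Set ℕ).Nonempty := ⟨m - 1, hTne⟩
    exact ⟨sInf _, Nat.sInf_mem hne', fun t' h1 h2 h3 => Nat.sInf_le ⟨h1, h2, h3⟩⟩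
  have hca : ((a + (t : ZMod m)) - a).val = t := by
    rw [add_sub_cancel_left, ZMod.val_cast_of_lt ht2]
  have hbc_nc : ∀ q ∈ D, ¬ Crosses (b, a + (t : ZMod m)) q := by
    have main : ∀ x y : ZMod m, (x, y) ∈ D →
        Between b x (a + (t : ZMod m)) → Between (a + (t : ZMod m)) y b → False := by
      intro x y hq h1 h2
      rw [between_coord a] at h1 h2
      rw [hca] at h1 h2
      have hXm := ZMod.val_lt (x - a)
      have hYm := ZMod.val_lt (y - a)
      obtain ⟨h1a, h1b⟩ := h1
      obtain ⟨h2a, h2b⟩ := h2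
      have hXrng : (b - a).val < (x - a).val ∧ (x - a).val < t := by
        split_ifs at h1a h1b <;> omega
      have hYrng : (y - a).val < (b - a).val ∨ t < (y - a).val := by
        split_ifs at h2a h2b <;> omega
      obtain ⟨hXs, hXt⟩ := hXrng
      rcases hYrng with hY | hY
      · rcases Nat.eq_zero_or_pos (y - a).val with hY0 | hY0
        · -- y = a : chord (x,a) itself contradicts minimality of t
          have hya : y = a := by
            have h' := (ZMod.val_eq_zero (y - a)).mp hY0
            linear_combination h'
          have hle := htmin (x - a).val hXs hXm (fun q' hq' => by
            have hx : a + (((x - a).val : ℕ) : ZMod m) = x := by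
              rw [ZMod.natCast_zmod_val]; ring
            rw [hx]
            have hxa : (x, a) ∈ D := by rw [← hya]; exact hq
            exact hD.noncross _ hxa q' hq')
          omega
        · -- 0 < Y < s : q crosses (a,b)
          have hB1 : Between a y b := ⟨hY0, by omega⟩
          have hB2 : Between b x a := by
            constructor
            · rw [show x - b = (x - a) - (b - a) by ring, val_sub' (x - a) (b - a)]
              split_ifs <;> omega
            · rw [show x - b = (x - a) - (b - a) by ring, val_sub' (x - a) (b - a), hsm]
              split_ifs <;> omega
          exact hD.noncross _ hab _ hq (Or.inr ⟨hB1, hB2⟩)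
      · -- t < Y : q crosses (a + t, a)
        have hB1 : Between (a + (t : ZMod m)) y a := by
          constructor
          · rw [show y - (a + (t : ZMod m)) = (y - a) - ((a + (t : ZMod m)) - a) by ring,
              val_sub' (y - a) ((a + (t : ZMod m)) - a), hca]
            split_ifs <;> omega
          · rw [show y - (a + (t : ZMod m)) = (y - a) - ((a + (t : ZMod m)) - a) by ring,
              show a - (a + (t : ZMod m)) = (a - a) - ((a + (t : ZMod m)) - a) by ring,
              val_sub' (y - a) ((a + (t : ZMod m)) - a),
              val_sub' (a - a) ((a + (t : ZMod m)) - a), hca, sub_self, ZMod.val_zero]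
            split_ifs <;> omega
        have hB2 : Between a x (a + (t : ZMod m)) := ⟨by omega, by rw [hca]; exact hXt⟩
        exact htnc _ hq (Or.inr ⟨hB1, hB2⟩)
    rintro ⟨x, y⟩ hq (⟨h1, h2⟩ | ⟨h1, h2⟩)
    · exact main x y hq h1 h2
    · exact main y x (hD.symm _ hq) h1 h2
  have hcb : ((a + (t : ZMod m)) - b).val = t - (b - a).val := by
    rw [show (a + (t : ZMod m)) - b = ((a + (t : ZMod m)) - a) - (b - a) by ring,
      val_sub' ((a + (t : ZMod m)) - a) (b - a), hca, if_pos (by omega)]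
  have hE1 : (b, a + (t : ZMod m)) ∈ D ∨ ((a + (t : ZMod m)) - b).val = 1 := by
    rcases eq_or_ne (t - (b - a).val) 1 with h1 | h1
    · right; rw [hcb, h1]
    · left
      refine hD.maximal _ ⟨?_, ?_, ?_⟩ hbc_nc
      · intro h
        replace h : b = a + (t : ZMod m) := h
        have h' : (a + (t : ZMod m)) - b = 0 := by linear_combination -h
        rw [h', ZMod.val_zero] at hcb; omega
      · intro h
        replace h : a + (t : ZMod m) = b + 1 := h
        have h' : (a + (t : ZMod m)) - b = 1 := by linear_combination h
        rw [h', ZMod.val_one] at hcb; omega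
      · intro h
        replace h : b = (a + (t : ZMod m)) + 1 := h
        have hbc0 : (a + (t : ZMod m)) - b ≠ 0 := by
          intro h0; rw [h0, ZMod.val_zero] at hcb; omega
        have hbval : (b - (a + (t : ZMod m))).val = m - (t - (b - a).val) := by
          rw [show b - (a + (t : ZMod m)) = -((a + (t : ZMod m)) - b) by ring, ZMod.neg_val,
            if_neg hbc0, hcb]
        have h' : b - (a + (t : ZMod m)) = 1 := by linear_combination h
        rw [h', ZMod.val_one] at hbval; omega
  have hc0 : (a + (t : ZMod m)) - a ≠ 0 := by
    intro h
    have := hca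
    rw [h, ZMod.val_zero] at this; omega
  have hac : (a - (a + (t : ZMod m))).val = m - t := by
    rw [show a - (a + (t : ZMod m)) = -((a + (t : ZMod m)) - a) by ring, ZMod.neg_val,
      if_neg hc0, hca]
  have hE2 : (a + (t : ZMod m), a) ∈ D ∨ (a - (a + (t : ZMod m))).val = 1 := by
    rcases eq_or_ne (m - t) 1 with h1 | h1
    · right; rw [hac, h1]
    · left
      refine hD.maximal _ ⟨?_, ?_, ?_⟩ (fun q hq => htnc q hq)
      · intro h
        replace h : a + (t : ZMod m) = a := h
        have h' : a - (a + (t : ZMod m)) = 0 := by linear_combination -h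
        rw [h', ZMod.val_zero] at hac; omega
      · intro h
        replace h : a = (a + (t : ZMod m)) + 1 := h
        have h' : a - (a + (t : ZMod m)) = 1 := by linear_combination h
        rw [h', ZMod.val_one] at hac; omega
      · intro h
        replace h : a + (t : ZMod m) = a + 1 := h
        have h' : (a + (t : ZMod m)) - a = 1 := by linear_combination h
        rw [h', ZMod.val_one] at hca; omega
  exact ⟨a + (t : ZMod m), by rw [hca]; exact ht1, hE1, hE2⟩

/-- Every triangulation of the regular `(3n+3)`-gon invariant under the rotation `g`
by `2π/3` contains a diagonal `d` spanning exactly an angle of `2π/3` (connecting some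
`i` and `i + n + 1`), and `d, g·d, g²·d` form a central triangle of the triangulation. -/
theorem central_triangle (n : ℕ) (hn : 1 ≤ n)
    (D : Set (ZMod (3 * n + 3) × ZMod (3 * n + 3)))
    (hD : IsTriangulation (3 * n + 3) D)
    (hg : RotInvariant (3 * n + 3) (n + 1) D) :
    ∃ i : ZMod (3 * n + 3),
      (i, i + ((n + 1 : ℕ) : ZMod (3 * n + 3))) ∈ D ∧
      (i + ((n + 1 : ℕ) : ZMod (3 * n + 3)), i + ((2 * (n + 1) : ℕ) : ZMod (3 * n + 3))) ∈ D ∧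
      (i + ((2 * (n + 1) : ℕ) : ZMod (3 * n + 3)), i) ∈ D := by
  classical
  -- spans of diagonals avoid (n+1, 2n+2)
  have hspan : ∀ x y : ZMod (3 * n + 3), (x, y) ∈ D →
      ¬ (n + 1 < (y - x).val ∧ (y - x).val < 2 * n + 2) := by
    rintro x y hp ⟨h1, h2⟩
    have hq := (hg (x, y)).mp hp
    have hk : ((n + 1 : ℕ) : ZMod (3 * n + 3)).val = n + 1 := ZMod.val_cast_of_lt (by omega)
    have hyx0 : y - x ≠ 0 := by
      intro h
      have h1' := h1
      rw [h, ZMod.val_zero] at h1'; omega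
    have hxy : (x - y).val = 3 * n + 3 - (y - x).val := by
      rw [show x - y = -(y - x) by ring, ZMod.neg_val, if_neg hyx0]
    have hB1 : Between x (x + ((n + 1 : ℕ) : ZMod (3 * n + 3))) y := by
      constructor
      · rw [add_sub_cancel_left, hk]; omega
      · rw [add_sub_cancel_left, hk]; omega
    have hB2 : Between y (y + ((n + 1 : ℕ) : ZMod (3 * n + 3))) x := by
      constructor
      · rw [add_sub_cancel_left, hk]; omega
      · rw [add_sub_cancel_left, hk, hxy]; omega
    exact hD.noncross _ hp _ hq (Or.inl ⟨hB1, hB2⟩)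
  by_cases hex : ∃ a b : ZMod (3 * n + 3), (a, b) ∈ D ∧ (b - a).val = n + 1
  · obtain ⟨a, b, hab, hs⟩ := hex
    have hb : b = a + ((n + 1 : ℕ) : ZMod (3 * n + 3)) := by
      have h' : ((n + 1 : ℕ) : ZMod (3 * n + 3)) = b - a := by
        rw [← hs, ZMod.natCast_zmod_val]
      rw [h']; ring
    have h1 : (a, a + ((n + 1 : ℕ) : ZMod (3 * n + 3))) ∈ D := by rw [← hb]; exact hab
    have h2 := (hg (a, a + ((n + 1 : ℕ) : ZMod (3 * n + 3)))).mp h1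
    have h3 := (hg _).mp h2
    have e2 : a + ((2 * (n + 1) : ℕ) : ZMod (3 * n + 3)) =
        a + ((n + 1 : ℕ) : ZMod (3 * n + 3)) + ((n + 1 : ℕ) : ZMod (3 * n + 3)) := by
      push_cast; ring
    have e3 : a + ((n + 1 : ℕ) : ZMod (3 * n + 3)) + ((n + 1 : ℕ) : ZMod (3 * n + 3)) +
        ((n + 1 : ℕ) : ZMod (3 * n + 3)) = a := by
      have hz : ((3 * n + 3 : ℕ) : ZMod (3 * n + 3)) = 0 := ZMod.natCast_self _
      push_cast at hz ⊢
      linear_combination hz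
    refine ⟨a, h1, ?_, ?_⟩
    · rw [e2]; exact h2
    · rw [e2]
      have h3' := h3
      rw [e3] at h3'
      exact h3'
  · exfalso
    push_neg at hex
    -- every diagonal has span in [2,n] ∪ [2n+3, 3n+1]
    have hbnd : ∀ x y : ZMod (3 * n + 3), (x, y) ∈ D →
        ((y - x).val ≤ n ∨ (2 * n + 3 ≤ (y - x).val ∧ (y - x).val ≤ 3 * n + 1)) := by
      intro x y hp
      obtain ⟨hne0, hadj1, hadj2⟩ := hD.diag _ hp
      replace hne0 : x ≠ y := hne0
      replace hadj1 : y ≠ x + 1 := hadj1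
      replace hadj2 : x ≠ y + 1 := hadj2
      have h0 : (y - x).val ≠ 0 := by
        intro h
        exact hne0 ((sub_eq_zero.mp ((ZMod.val_eq_zero _).mp h)).symm)
      have hyx0 : y - x ≠ 0 := fun h => h0 (by rw [h, ZMod.val_zero])
      have h1 : (y - x).val ≠ 1 := by
        intro h
        refine hadj1 ?_
        have h' : y - x = 1 := by rw [← ZMod.natCast_zmod_val (y - x), h, Nat.cast_one]
        linear_combination h'
      have hxy : (x - y).val = 3 * n + 3 - (y - x).val := by
        rw [show x - y = -(y - x) by ring, ZMod.neg_val, if_neg hyx0]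
      have h2 : (x - y).val ≠ 1 := by
        intro h
        refine hadj2 ?_
        have h' : x - y = 1 := by rw [← ZMod.natCast_zmod_val (x - y), h, Nat.cast_one]
        linear_combination h'
      have hsp := hspan x y hp
      have hnoA := hex x y hp
      have hnoB := hex y x (hD.symm _ hp)
      have hlt := ZMod.val_lt (y - x)
      omega
    -- D is nonempty
    have hcastne : ∀ i j : ℕ, i < 3 * n + 3 → j < 3 * n + 3 → i ≠ j →
        ((i : ZMod (3 * n + 3)) ≠ (j : ZMod (3 * n + 3))) := by
      intro i j hi hj hij h
      exact hij (by rw [← ZMod.val_cast_of_lt hi, ← ZMod.val_cast_of_lt hj, h])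
    have hDne : D.Nonempty := by
      by_contra hne
      rw [Set.not_nonempty_iff_eq_empty] at hne
      have hd : IsDiagonal (((0 : ℕ) : ZMod (3 * n + 3)), ((2 : ℕ) : ZMod (3 * n + 3))) := by
        refine ⟨hcastne 0 2 (by omega) (by omega) (by omega), ?_, ?_⟩
        · have e1 : ((0 : ℕ) : ZMod (3 * n + 3)) + 1 = ((1 : ℕ) : ZMod (3 * n + 3)) := by
            push_cast; ring
          rw [e1]
          exact hcastne 2 1 (by omega) (by omega) (by omega)
        · have e1 : ((2 : ℕ) : ZMod (3 * n + 3)) + 1 = ((3 : ℕ) : ZMod (3 * n + 3)) := by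
            push_cast; ring
          rw [e1]
          exact hcastne 0 3 (by omega) (by omega) (by omega)
      have hmem := hD.maximal _ hd (fun q hq => by rw [hne] at hq; exact absurd hq (Set.notMem_empty q))
      rw [hne] at hmem
      exact Set.notMem_empty _ hmem
    obtain ⟨⟨a₀, b₀⟩, hp₀⟩ := hDne
    -- the finset of achieved short spans
    set W : Finset ℕ := (Finset.range (n + 1)).filter
      (fun u => ∃ x y : ZMod (3 * n + 3), (x, y) ∈ D ∧ (y - x).val = u) with hWdef
    have hWne : W.Nonempty := by
      rcases hbnd a₀ b₀ hp₀ with h | h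
      · exact ⟨(b₀ - a₀).val, Finset.mem_filter.mpr
          ⟨Finset.mem_range.mpr (by omega), a₀, b₀, hp₀, rfl⟩⟩
      · have hsymm := hD.symm _ hp₀
        have hv0 : b₀ - a₀ ≠ 0 := by
          intro h'
          rw [h', ZMod.val_zero] at h
          omega
        have hxy : (a₀ - b₀).val = 3 * n + 3 - (b₀ - a₀).val := by
          rw [show a₀ - b₀ = -(b₀ - a₀) by ring, ZMod.neg_val, if_neg hv0]
        have hlt := ZMod.val_lt (b₀ - a₀)
        exact ⟨(a₀ - b₀).val, Finset.mem_filter.mpr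
          ⟨Finset.mem_range.mpr (by omega), b₀, a₀, hsymm, rfl⟩⟩
    have hWmem : ∀ x y : ZMod (3 * n + 3), (x, y) ∈ D → (y - x).val ≤ n →
        (y - x).val ∈ W := by
      intro x y h hle
      exact Finset.mem_filter.mpr ⟨Finset.mem_range.mpr (by omega), x, y, h, rfl⟩
    obtain ⟨hsn, a, b, hab, hsval⟩ :
        W.max' hWne ∈ Finset.range (n + 1) ∧
        ∃ x y : ZMod (3 * n + 3), (x, y) ∈ D ∧ (y - x).val = W.max' hWne := by
      exact Finset.mem_filter.mp (W.max'_mem hWne)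
    rw [Finset.mem_range] at hsn
    obtain ⟨c, hct, hE1, hE2⟩ := apex hD hab
    have htm := ZMod.val_lt (c - a)
    have hc0 : c - a ≠ 0 := by
      intro h
      rw [h, ZMod.val_zero] at hct
      omega
    have hcb : (c - b).val = (c - a).val - (b - a).val := by
      rw [show c - b = (c - a) - (b - a) by ring, val_sub' (c - a) (b - a),
        if_pos (by omega)]
    have hac : (a - c).val = 3 * n + 3 - (c - a).val := by
      rw [show a - c = -(c - a) by ring, ZMod.neg_val, if_neg hc0]
    have hsmax : ∀ u ∈ W, u ≤ W.max' hWne := fun u hu => W.le_max' u hu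
    rcases hE1 with hbc | hu1
    · rcases hbnd b c hbc with hu | hu
      · rcases hE2 with hca2 | hv1
        · rcases hbnd c a hca2 with hv | hv
          · omega
          · -- v large: (a, c) has short span (c-a).val > max, contradiction
            have hca' : (c - a).val = 3 * n + 3 - (a - c).val := by omega
            have hmem := hWmem a c (hD.symm _ hca2) (by omega)
            have := hsmax _ hmem
            omega
        · omega
      · -- u large: (c, b) has short span > max
        have hcb0 : c - b ≠ 0 := by
          intro h'
          rw [h', ZMod.val_zero] at hcb
          omega
        have hbc' : (b - c).val = 3 * n + 3 - (c - b).val := by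
          rw [show b - c = -(c - b) by ring, ZMod.neg_val, if_neg hcb0]
        have hmem := hWmem c b (hD.symm _ hbc) (by omega)
        have := hsmax _ hmem
        omega
    · rcases hE2 with hca2 | hv1
      · rcases hbnd c a hca2 with hv | hv
        · omega
        · have hmem := hWmem a c (hD.symm _ hca2) (by omega)
          have := hsmax _ hmem
          omega
      · omega
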